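/- Let G be a finite p-group, d ≥ 0, and e ≥ 1 such that G^{(d+1)} ≤ γ_{2^{d+1}+1}(G) and G^{(d+e+1)} ≠ 1. Then |G^{(d+e)}/G^{(d+e+1)}| > p^{2^{d+e}+1}; that is, the derived quotient G^{(d+e)}/G^{(d+e+1)} is not small. -/

import Mathlib

open Subgroup Pointwise

namespace HallAuxProof

variable {G : Type*} [Group G]

/-- iterated commutator `[N,G], [[N,G],G], ...` -/
def iter (N : Subgroup G) : ℕ → Subgroup G
  | 0 => N
  | k + 1 => ⁅iter N k, (⊤ : Subgroup G)⁆

@[simp] lemma iter_zero (N : Subgroup G) : iter N 0 = N := rfl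

@[simp] lemma iter_succ (N : Subgroup G) (k : ℕ) :
    iter N (k + 1) = ⁅iter N k, (⊤ : Subgroup G)⁆ := rfl

lemma iter_normal (N : Subgroup G) [hN : N.Normal] (k : ℕ) : (iter N k).Normal := by
  induction k with
  | zero => exact hN
  | succ k ih => exact @Subgroup.commutator_normal _ _ _ _ ih _

lemma iter_succ_le (N : Subgroup G) [N.Normal] (k : ℕ) : iter N (k + 1) ≤ iter N k := by
  haveI := iter_normal N k
  exact commutator_le_left _ _

lemma iter_antitone (N : Subgroup G) [N.Normal] : Antitone (iter N) :=
  antitone_nat_of_succ_le (iter_succ_le N)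

lemma iter_add (N : Subgroup G) (a b : ℕ) : iter N (a + b) = iter (iter N a) b := by
  induction b with
  | zero => rfl
  | succ b ih => rw [← Nat.add_assoc, iter_succ, iter_succ, ih]

lemma lcs_succ_eq (n : ℕ) :
    (⊤ : Subgroup G).lowerCentralSeries (n + 1) = ⁅(⊤ : Subgroup G).lowerCentralSeries n, (⊤ : Subgroup G)⁆ := rfl

lemma iter_le_lcs {N : Subgroup G} {c : ℕ} (h : N ≤ (⊤ : Subgroup G).lowerCentralSeries c) (k : ℕ) :
    iter N k ≤ (⊤ : Subgroup G).lowerCentralSeries (c + k) := by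
  induction k with
  | zero => exact h
  | succ k ih =>
    calc iter N (k + 1) = ⁅iter N k, (⊤ : Subgroup G)⁆ := rfl
      _ ≤ ⁅(⊤ : Subgroup G).lowerCentralSeries (c + k), (⊤ : Subgroup G)⁆ := commutator_mono ih le_rfl
      _ = (⊤ : Subgroup G).lowerCentralSeries (c + k + 1) := (lcs_succ_eq _).symm

lemma eq_bot_of_comm_top_eq (hnil : ∃ n, (⊤ : Subgroup G).lowerCentralSeries n = ⊥) {N : Subgroup G}
    (h : ⁅N, (⊤ : Subgroup G)⁆ = N) : N = ⊥ := by
  obtain ⟨n, hn⟩ := hnil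
  have key : ∀ m, N ≤ (⊤ : Subgroup G).lowerCentralSeries m := by
    intro m
    induction m with
    | zero => exact le_top
    | succ m ih =>
      calc N = ⁅N, (⊤ : Subgroup G)⁆ := h.symm
        _ ≤ ⁅(⊤ : Subgroup G).lowerCentralSeries m, (⊤ : Subgroup G)⁆ := commutator_mono ih le_rfl
        _ = (⊤ : Subgroup G).lowerCentralSeries (m + 1) := (lcs_succ_eq _).symm
  exact le_bot_iff.mp (hn ▸ key n)

/-- three subgroups lemma, `≤` version -/
lemma three {A B C K : Subgroup G} [K.Normal] (h1 : ⁅⁅B, C⁆, A⁆ ≤ K) (h2 : ⁅⁅C, A⁆, B⁆ ≤ K) :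
    ⁅⁅A, B⁆, C⁆ ≤ K := by
  rw [← QuotientGroup.ker_mk' K] at h1 h2 ⊢
  rw [← Subgroup.map_eq_bot_iff] at h1 h2 ⊢
  rw [Subgroup.map_commutator, Subgroup.map_commutator] at h1 h2 ⊢
  exact Subgroup.commutator_commutator_eq_bot_of_rotate h1 h2

lemma comm_lcs_le (c : ℕ) : ∀ (N : Subgroup G), N.Normal →
    ⁅N, (⊤ : Subgroup G).lowerCentralSeries c⁆ ≤ iter N (c + 1) := by
  induction c with
  | zero =>
    intro N _
    rw [Subgroup.lowerCentralSeries_zero]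
    exact le_of_eq rfl
  | succ c ih =>
    intro N hN
    haveI := hN
    haveI := iter_normal N (c + 2)
    rw [lcs_succ_eq, commutator_comm]
    refine three ?_ ?_
    · -- ⁅⁅⊤, N⁆, lcs c⁆ ≤ iter N (c+2)
      rw [commutator_comm (⊤ : Subgroup G) N]
      haveI := iter_normal N 1
      refine (ih (iter N 1) (iter_normal N 1)).trans (le_of_eq ?_)
      rw [← iter_add]
      congr 1
      omega
    · -- ⁅⁅N, lcs c⁆, ⊤⁆ ≤ iter N (c+2)
      calc ⁅⁅N, (⊤ : Subgroup G).lowerCentralSeries c⁆, (⊤ : Subgroup G)⁆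
          ≤ ⁅iter N (c + 1), (⊤ : Subgroup G)⁆ := commutator_mono (ih N hN) le_rfl
        _ = iter N (c + 2) := rfl

open scoped commutatorElement in
lemma sup_comm_le {K L M N : Subgroup G} [L.Normal] [hN : N.Normal]
    (h1 : ⁅K, M⁆ ≤ N) (h2 : ⁅L, M⁆ ≤ N) : ⁅K ⊔ L, M⁆ ≤ N := by
  rw [commutator_le]
  intro g hg m hm
  have hg' : g ∈ ((K : Set G) * (L : Set G)) := by
    rw [← Subgroup.mul_normal K L]; exact hg
  obtain ⟨k, hk, l, hl, rfl⟩ := hg'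
  have hid : ⁅k * l, m⁆ = k * ⁅l, m⁆ * k⁻¹ * ⁅k, m⁆ := by
    simp only [commutatorElement_def]; group
  rw [hid]
  exact N.mul_mem (hN.conj_mem _ (h2 (commutator_mem_commutator hl hm)) k)
    (h1 (commutator_mem_commutator hk hm))

lemma p_le_relindex {p : ℕ} (hp : p.Prime) [Finite G] (hG : IsPGroup p G)
    {A B : Subgroup G} (h : A < B) : p ≤ A.relIndex B := by
  haveI := Fact.mk hp
  obtain ⟨n, hn⟩ := (hG.to_subgroup B).index (A.subgroupOf B)
  have hrel : A.relIndex B = p ^ n := hn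
  rw [hrel]
  rcases Nat.eq_zero_or_pos n with rfl | h0
  · rw [pow_zero] at hn
    exact absurd (Subgroup.subgroupOf_eq_top.mp (Subgroup.index_eq_one.mp hn)) h.not_ge
  · exact Nat.le_self_pow h0.ne' p

lemma relindex_pos [Finite G] (A B : Subgroup G) : 0 < A.relIndex B := by
  have h : (A.subgroupOf B).FiniteIndex := inferInstance
  exact Nat.pos_of_ne_zero h.index_ne_zero

/-- Hall's bound: a nonabelian normal subgroup `H ≤ γ_{c+1}(G)` of a finite `p`-group
satisfies `|H/H'| ≥ p^(c+2)`. -/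
lemma hall {p : ℕ} (hp : p.Prime) {G : Type*} [Group G] [Finite G] (hG : IsPGroup p G)
    (H : Subgroup G) [hH : H.Normal] (c : ℕ)
    (hle : H ≤ (⊤ : Subgroup G).lowerCentralSeries c) (hne : ⁅H, H⁆ ≠ ⊥) :
    p ^ (c + 2) ≤ (⁅H, H⁆).relIndex H := by
  haveI := Fact.mk hp
  have hnil : ∃ n, (⊤ : Subgroup G).lowerCentralSeries n = ⊥ := by
    haveI := hG.isNilpotent
    exact Subgroup.nilpotent_iff_lowerCentralSeries.mp inferInstance
  set D := ⁅H, H⁆ with hD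
  haveI hDnormal : D.Normal := Subgroup.commutator_normal H H
  have hDH : D ≤ H := commutator_le_left H H
  have hD1 : D ≤ iter H 1 := commutator_mono le_rfl le_top
  have hDc1 : D ≤ iter H (c + 1) :=
    (commutator_mono le_rfl hle).trans (comm_lcs_le c H hH)
  -- strictness of the chain
  have hDle : ∀ t, D ≤ iter H (t + 1) → ∀ k, k ≤ t → iter H (k + 1) ⊔ D < iter H k ⊔ D := by
    intro t hDt k hk
    refine lt_of_le_of_ne (sup_le_sup_right (iter_succ_le H k) D) (fun heq => hne ?_)
    haveI := iter_normal H (k + 1)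
    haveI := iter_normal H (k + 2)
    have h1 : iter H (k + 1) ≤ ⁅iter H (k + 1) ⊔ D, (⊤ : Subgroup G)⁆ := by
      conv_lhs => rw [iter_succ]
      exact commutator_mono (heq.symm ▸ le_sup_left) le_rfl
    have h2 : ⁅iter H (k + 1) ⊔ D, (⊤ : Subgroup G)⁆ ≤ iter H (k + 2) := by
      refine sup_comm_le (le_of_eq rfl) ?_
      calc ⁅D, (⊤ : Subgroup G)⁆ ≤ ⁅iter H (t + 1), (⊤ : Subgroup G)⁆ :=
            commutator_mono hDt le_rfl
        _ = iter H (t + 2) := rfl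
        _ ≤ iter H (k + 2) := iter_antitone H (by omega)
    have heq2 : ⁅iter H (k + 1), (⊤ : Subgroup G)⁆ = iter H (k + 1) :=
      le_antisymm (iter_succ_le H (k + 1)) (h1.trans h2)
    have hbot : iter H (k + 1) = ⊥ := eq_bot_of_comm_top_eq hnil heq2
    exact le_bot_iff.mp ((hDt.trans (iter_antitone H (by omega : k + 1 ≤ t + 1))).trans
      hbot.le)
  -- counting along the chain
  have count : ∀ t, D ≤ iter H (t + 1) → ∀ (j k : ℕ), k + j ≤ t + 1 →
      p ^ j * D.relIndex (iter H (k + j) ⊔ D) ≤ D.relIndex (iter H k ⊔ D) := by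
    intro t hDt j
    induction j with
    | zero => intro k _; simpa using le_rfl
    | succ j ih =>
      intro k hk
      have hstep : iter H (k + 1) ⊔ D < iter H k ⊔ D := hDle t hDt k (by omega)
      have hmul : D.relIndex (iter H (k + 1) ⊔ D) *
          (iter H (k + 1) ⊔ D).relIndex (iter H k ⊔ D) = D.relIndex (iter H k ⊔ D) :=
        Subgroup.relIndex_mul_relIndex _ _ _ le_sup_right
          (sup_le_sup_right (iter_succ_le H k) D)
      have e1 : k + (j + 1) = (k + 1) + j := by omega
      calc p ^ (j + 1) * D.relIndex (iter H (k + (j + 1)) ⊔ D)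
          = p * (p ^ j * D.relIndex (iter H ((k + 1) + j) ⊔ D)) := by rw [e1]; ring
        _ ≤ p * D.relIndex (iter H (k + 1) ⊔ D) :=
            Nat.mul_le_mul_left _ (ih (k + 1) (by omega))
        _ ≤ (iter H (k + 1) ⊔ D).relIndex (iter H k ⊔ D) * D.relIndex (iter H (k + 1) ⊔ D) :=
            Nat.mul_le_mul_right _ (p_le_relindex hp hG hstep)
        _ = D.relIndex (iter H k ⊔ D) := by rw [Nat.mul_comm]; exact hmul
  have hH0 : iter H 0 ⊔ D = H := sup_eq_left.mpr hDH
  set A1 := iter H 1 with hA1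
  haveI hA1normal : A1.Normal := iter_normal H 1
  haveI : (A1.subgroupOf H).Normal := Subgroup.normal_subgroupOf
  by_cases hcyc : IsCyclic (H ⧸ A1.subgroupOf H)
  · -- cyclic case: H = ⟨x⟩ ⊔ A1, hence D ≤ [H, A1] ≤ iter H (c+2)
    obtain ⟨g, hg⟩ := hcyc.exists_generator
    obtain ⟨x, hx⟩ := QuotientGroup.mk'_surjective (A1.subgroupOf H) g
    have hgen : H ≤ Subgroup.closure {(x : G)} ⊔ A1 := by
      intro hh hmem
      have h1 := hg (QuotientGroup.mk' (A1.subgroupOf H) ⟨hh, hmem⟩)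
      rw [Subgroup.mem_zpowers_iff] at h1
      obtain ⟨k, hk⟩ := h1
      rw [← hx, ← map_zpow] at hk
      obtain ⟨z, hz, hzeq⟩ := (QuotientGroup.mk'_eq_mk' _).mp hk
      have hcoe : hh = (x : G) ^ k * (z : G) := by
        have := congrArg (Subtype.val) hzeq
        simpa using this.symm
      rw [hcoe]
      exact mul_mem
        (Subgroup.mem_sup_left (zpow_mem (Subgroup.subset_closure (Set.mem_singleton _)) k))
        (Subgroup.mem_sup_right (Subgroup.mem_subgroupOf.mp hz))
    have hgeneq : Subgroup.closure {(x : G)} ⊔ A1 = H := by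
      refine le_antisymm (sup_le ?_ (iter_succ_le H 0)) hgen
      rw [Subgroup.closure_le]
      intro y hy
      rw [Set.mem_singleton_iff] at hy
      subst hy
      exact x.2
    haveI hMnormal : (⁅H, A1⁆).Normal := Subgroup.commutator_normal H A1
    have hkey : D ≤ ⁅H, A1⁆ := by
      set M := ⁅H, A1⁆ with hM
      set π := QuotientGroup.mk' M with hπ
      rw [hD, ← QuotientGroup.ker_mk' M, ← Subgroup.map_eq_bot_iff,
        Subgroup.map_commutator]
      -- goal : ⁅map π H, map π H⁆ = ⊥
      have hcomm : ⁅Subgroup.map π H, Subgroup.map π A1⁆ = ⊥ := by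
        rw [← Subgroup.map_commutator, Subgroup.map_eq_bot_iff, QuotientGroup.ker_mk']
      have hc : ∀ a ∈ Subgroup.map π A1, ∀ y ∈ Subgroup.map π H, a * y = y * a := by
        intro a ha y hy
        have hmem := commutator_mem_commutator ha hy
        rw [Subgroup.commutator_comm, hcomm, Subgroup.mem_bot] at hmem
        exact commutatorElement_eq_one_iff_mul_comm.mp hmem
      have hHbar : Subgroup.map π H =
          Subgroup.zpowers (π (x : G)) ⊔ Subgroup.map π A1 := by
        refine (congrArg (Subgroup.map π) hgeneq).symm.trans ?_
        rw [Subgroup.map_sup, MonoidHom.map_closure, Set.image_singleton,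
          ← Subgroup.zpowers_eq_closure]
      have hA1H : Subgroup.map π A1 ≤ Subgroup.map π H :=
        Subgroup.map_mono (iter_succ_le H 0)
      rw [eq_bot_iff, commutator_le]
      intro a ha b hb
      rw [Subgroup.mem_bot, commutatorElement_eq_one_iff_mul_comm]
      rw [hHbar] at ha hb
      have ha' : a ∈ (↑(Subgroup.zpowers (π (x : G))) * ↑(Subgroup.map π A1) : Set (G ⧸ M)) := by
        rw [← Subgroup.mul_normal]; exact ha
      have hb' : b ∈ (↑(Subgroup.zpowers (π (x : G))) * ↑(Subgroup.map π A1) : Set (G ⧸ M)) := by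
        rw [← Subgroup.mul_normal]; exact hb
      obtain ⟨s, hs, u, hu, rfl⟩ := ha'
      obtain ⟨t, ht, v, hv, rfl⟩ := hb'
      simp only [SetLike.mem_coe] at hs ht hu hv
      rw [Subgroup.mem_zpowers_iff] at hs ht
      obtain ⟨ms, rfl⟩ := hs
      obtain ⟨mt, rfl⟩ := ht
      have hxH : π (x : G) ∈ Subgroup.map π H := Subgroup.mem_map_of_mem π x.2
      have hst : Commute (π (x : G) ^ ms) (π (x : G) ^ mt) :=
        (Commute.refl _).zpow_zpow ms mt
      have hut : Commute u (π (x : G) ^ mt) :=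
        hc u hu _ (Subgroup.zpow_mem _ hxH mt)
      have huv : Commute u v := hc u hu v (hA1H hv)
      have hsv : Commute (π (x : G) ^ ms) v :=
        (hc v hv _ (Subgroup.zpow_mem _ hxH ms)).symm
      exact ((hst.mul_right hsv).mul_left (hut.mul_right huv)).eq
    have hMle : ⁅H, A1⁆ ≤ iter H (c + 2) := by
      calc ⁅H, A1⁆ = ⁅A1, H⁆ := commutator_comm _ _
        _ ≤ ⁅A1, (⊤ : Subgroup G).lowerCentralSeries c⁆ := commutator_mono le_rfl hle
        _ ≤ iter A1 (c + 1) := comm_lcs_le c A1 hA1normal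
        _ = iter H (c + 2) := by
            rw [hA1, ← iter_add]
            exact congrArg (iter H) (by omega)
    have hDt : D ≤ iter H (c + 2) := hkey.trans hMle
    have hcount := count (c + 1) hDt (c + 2) 0 (by omega)
    rw [Nat.zero_add, hH0] at hcount
    calc p ^ (c + 2) ≤ p ^ (c + 2) * D.relIndex (iter H (c + 2) ⊔ D) :=
          Nat.le_mul_of_pos_right _ (relindex_pos _ _)
      _ ≤ D.relIndex H := hcount
  · -- noncyclic case: [H : A1] ≥ p^2
    have hQp : IsPGroup p (H ⧸ A1.subgroupOf H) := (hG.to_subgroup H).to_quotient _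
    obtain ⟨n, hn⟩ := IsPGroup.iff_card.mp hQp
    have hcard : A1.relIndex H = Nat.card (H ⧸ A1.subgroupOf H) := rfl
    have hn2 : 2 ≤ n := by
      by_contra hlt
      push_neg at hlt
      interval_cases n
      · rw [pow_zero] at hn
        haveI : Subsingleton (H ⧸ A1.subgroupOf H) :=
          (Nat.card_eq_one_iff_unique.mp hn).1
        exact hcyc inferInstance
      · exact hcyc (isCyclic_of_prime_card (by simpa using hn))
    have h2 : p ^ 2 ≤ A1.relIndex H := by
      rw [hcard, hn]
      exact Nat.pow_le_pow_right hp.pos hn2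
    have hcount := count c hDc1 c 1 (by omega)
    have h1 : p ^ c ≤ D.relIndex (iter H 1 ⊔ D) := by
      refine le_trans (Nat.le_mul_of_pos_right _ (relindex_pos D (iter H (c + 1) ⊔ D))) ?_
      rw [Nat.add_comm 1 c] at hcount
      exact hcount
    have hA1D : iter H 1 ⊔ D = A1 := sup_eq_left.mpr hD1
    rw [hA1D] at h1
    have hmul : D.relIndex A1 * A1.relIndex H = D.relIndex H :=
      Subgroup.relIndex_mul_relIndex _ _ _ hD1 (iter_succ_le H 0)
    calc p ^ (c + 2) = p ^ c * p ^ 2 := by ring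
      _ ≤ D.relIndex A1 * A1.relIndex H := Nat.mul_le_mul h1 h2
      _ = D.relIndex H := hmul

end HallAuxProof

/-- If `G^(d+1) ≤ γ_{2^(d+1)+1}(G)` in a finite `p`-group `G`, and `e ≥ 1` with
`G^(d+e+1) ≠ 1`, then `|G^(d+e)/G^(d+e+1)| > p^(2^(d+e)+1)`, i.e. the derived quotient
`G^(d+e)/G^(d+e+1)` is not small. (Here `γ_i(G) = (⊤ : Subgroup G).lowerCentralSeries (i-1)`.) -/
theorem derived_quotient_not_small_of_le {p : ℕ} (hp : p.Prime) {G : Type*}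
    [Group G] [Finite G] (hG : IsPGroup p G) (d e : ℕ) (he : 1 ≤ e)
    (h : derivedSeries G (d + 1) ≤ (⊤ : Subgroup G).lowerCentralSeries (2 ^ (d + 1)))
    (hne : derivedSeries G (d + e + 1) ≠ ⊥) :
    p ^ (2 ^ (d + e) + 1) <
      (derivedSeries G (d + e + 1)).relIndex (derivedSeries G (d + e)) := by
  classical
  have key : ∀ k, derivedSeries G (d + 1 + k) ≤ (⊤ : Subgroup G).lowerCentralSeries (2 ^ (d + 1 + k)) := by
    intro k
    induction k with
    | zero => simpa using h
    | succ k ih =>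
      haveI : (derivedSeries G (d + 1 + k)).Normal := derivedSeries_normal _ _
      have step : derivedSeries G (d + 1 + (k + 1)) =
          ⁅derivedSeries G (d + 1 + k), derivedSeries G (d + 1 + k)⁆ := rfl
      rw [step]
      calc ⁅derivedSeries G (d + 1 + k), derivedSeries G (d + 1 + k)⁆
          ≤ ⁅derivedSeries G (d + 1 + k), (⊤ : Subgroup G).lowerCentralSeries (2 ^ (d + 1 + k))⁆ :=
            Subgroup.commutator_mono le_rfl ih
        _ ≤ HallAuxProof.iter (derivedSeries G (d + 1 + k)) (2 ^ (d + 1 + k) + 1) :=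
            HallAuxProof.comm_lcs_le _ _ inferInstance
        _ ≤ (⊤ : Subgroup G).lowerCentralSeries (2 ^ (d + 1 + k) + (2 ^ (d + 1 + k) + 1)) :=
            HallAuxProof.iter_le_lcs ih _
        _ ≤ (⊤ : Subgroup G).lowerCentralSeries (2 ^ (d + 1 + (k + 1))) := by
            refine Subgroup.lowerCentralSeries_antitone _ ?_
            have : 2 ^ (d + 1 + (k + 1)) = 2 ^ (d + 1 + k) * 2 := by
              rw [show d + 1 + (k + 1) = (d + 1 + k) + 1 by omega, pow_succ]
            omega
  obtain ⟨k, rfl⟩ : ∃ k, e = 1 + k := ⟨e - 1, by omega⟩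
  have hde : d + (1 + k) = d + 1 + k := by omega
  rw [hde] at hne ⊢
  haveI : (derivedSeries G (d + 1 + k)).Normal := derivedSeries_normal _ _
  have hne' : ⁅derivedSeries G (d + 1 + k), derivedSeries G (d + 1 + k)⁆ ≠ ⊥ := hne
  have hhall := HallAuxProof.hall hp hG (derivedSeries G (d + 1 + k)) (2 ^ (d + 1 + k))
    (key k) hne'
  have hrel : (derivedSeries G (d + 1 + k + 1)).relIndex (derivedSeries G (d + 1 + k)) =
      (⁅derivedSeries G (d + 1 + k), derivedSeries G (d + 1 + k)⁆).relIndex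
        (derivedSeries G (d + 1 + k)) := rfl
  rw [hrel]
  calc p ^ (2 ^ (d + 1 + k) + 1) < p ^ (2 ^ (d + 1 + k) + 2) :=
        Nat.pow_lt_pow_right hp.one_lt (by omega)
    _ ≤ _ := hhall
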